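/- Let n ≥ 1, U ⊆ ℝⁿ open, and (ε₁,…,ε_n) = (−1,1,…,1). Let A = (a^k_i) : U → M(n,ℝ) be differentiable with Σ_{j=1}^n ε_j (a^k_j)² = ε_k at every point, for every k. Let f_{ij} : U → ℝ be functions, and suppose ∂_{x_j} a^k_i = a^k_j f_{ij} holds for all k and all i ≠ j. Then for every i and k: a^k_i ∂_{x_i} a^k_i = −ε_i Σ_{j≠i} ε_j a^k_j a^k_i f_{ji}; in particular, at every point where a^k_i ≠ 0, ∂_{x_i} a^k_i = −ε_i Σ_{j≠i} ε_j a^k_j f_{ji}. -/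

import Mathlib

/- STATEMENT 10: the intermediate relation (eq:a^k_i_i) in Step 1 of the proof of
   Theorem 3.5: orthogonality Σ_j ε_j (a^k_j)² = ε_k together with
   ∂_{x_j} a^k_i = a^k_j f_{ij} (i ≠ j) determines the diagonal derivatives. -/

noncomputable section

open Matrix

variable {n : ℕ}

/-- partial derivative ∂_{x_j} of a scalar function on ℝⁿ -/
def pd (j : Fin n) (f : (Fin n → ℝ) → ℝ) (x : Fin n → ℝ) : ℝ :=
  fderiv ℝ f x (Pi.single j 1)

/-- ε = (−1,1,…,1) -/
def eps {n : ℕ} (k : Fin n) : ℝ := if (k : ℕ) = 0 then -1 else 1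

theorem diagonal_derivatives (hn : 0 < n) (U : Set (Fin n → ℝ)) (hU : IsOpen U)
    (A : (Fin n → ℝ) → Matrix (Fin n) (Fin n) ℝ)
    (hAdiff : ∀ x ∈ U, ∀ k i : Fin n, DifferentiableAt ℝ (fun y => A y k i) x)
    (hAorth : ∀ x ∈ U, ∀ k : Fin n, ∑ j : Fin n, eps j * (A x k j)^2 = eps k)
    (f : Fin n → Fin n → (Fin n → ℝ) → ℝ)
    (hoff : ∀ x ∈ U, ∀ k i j : Fin n, i ≠ j →
      pd j (fun y => A y k i) x = A x k j * f i j x) :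
    ∀ x ∈ U, ∀ i k : Fin n,
      (A x k i * pd i (fun y => A y k i) x
        = -eps i * ∑ j ∈ Finset.univ.filter (fun j : Fin n => j ≠ i),
            eps j * A x k j * A x k i * f j i x)
      ∧ (A x k i ≠ 0 →
          pd i (fun y => A y k i) x
            = -eps i * ∑ j ∈ Finset.univ.filter (fun j : Fin n => j ≠ i),
                eps j * A x k j * f j i x) := by
  intro x hx i k
  have heps2 : ∀ j : Fin n, eps j * eps j = 1 := by
    intro j; unfold eps; split <;> norm_num
  -- derivative of each square term
  have hdsq : ∀ j : Fin n, HasFDerivAt (fun y => eps j * (A y k j)^2)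
      ((eps j * (2 * A x k j)) • fderiv ℝ (fun y => A y k j) x) x := by
    intro j
    have h1 := (hAdiff x hx k j).hasFDerivAt
    have h3 : HasFDerivAt (fun y => eps j * (A y k j * A y k j))
        (eps j • (A x k j • fderiv ℝ (fun y => A y k j) x + A x k j • fderiv ℝ (fun y => A y k j) x)) x :=
      (h1.mul h1).const_mul (eps j)
    convert h3 using 1
    · funext y; ring
    · ext v
      simp [smul_smul]
      ring
  have hsum : HasFDerivAt (fun y => ∑ j : Fin n, eps j * (A y k j)^2)
      (∑ j : Fin n, (eps j * (2 * A x k j)) • fderiv ℝ (fun y => A y k j) x) x :=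
    HasFDerivAt.fun_sum (fun j _ => hdsq j)
  have hconst : (fun y => ∑ j : Fin n, eps j * (A y k j)^2) =ᶠ[nhds x] fun _ => eps k := by
    filter_upwards [hU.mem_nhds hx] with y hy using hAorth y hy k
  have hzero : (∑ j : Fin n, (eps j * (2 * A x k j)) • fderiv ℝ (fun y => A y k j) x) = 0 := by
    have h := hsum.fderiv
    rw [hconst.fderiv_eq] at h
    simpa using h.symm
  have happ : ∑ j : Fin n, (eps j * (2 * A x k j)) * pd i (fun y => A y k j) x = 0 := by
    have := congrArg (fun L => L (Pi.single i 1)) hzero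
    simpa [pd] using this
  have hsplit : (eps i * (2 * A x k i)) * pd i (fun y => A y k i) x
      + ∑ j ∈ Finset.univ.filter (fun j : Fin n => j ≠ i),
          (eps j * (2 * A x k j)) * pd i (fun y => A y k j) x = 0 := by
    rw [← happ, Finset.filter_ne']
    exact Finset.add_sum_erase Finset.univ (fun j => eps j * (2 * A x k j) * pd i (fun y => A y k j) x) (Finset.mem_univ i)
  have hoffsum : ∀ j ∈ Finset.univ.filter (fun j : Fin n => j ≠ i),
      (eps j * (2 * A x k j)) * pd i (fun y => A y k j) x
        = 2 * (eps j * A x k j * A x k i * f j i x) := by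
    intro j hj
    rw [Finset.mem_filter] at hj
    rw [hoff x hx k j i hj.2]
    ring
  rw [Finset.sum_congr rfl hoffsum, ← Finset.mul_sum] at hsplit
  have key : A x k i * pd i (fun y => A y k i) x
      = -eps i * ∑ j ∈ Finset.univ.filter (fun j : Fin n => j ≠ i),
          eps j * A x k j * A x k i * f j i x := by
    linear_combination (eps i / 2) * hsplit
      - (A x k i * pd i (fun y => A y k i) x) * heps2 i
  refine ⟨key, fun hA0 => ?_⟩
  have hrhs : -eps i * ∑ j ∈ Finset.univ.filter (fun j : Fin n => j ≠ i),
          eps j * A x k j * A x k i * f j i x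
      = A x k i * (-eps i * ∑ j ∈ Finset.univ.filter (fun j : Fin n => j ≠ i),
          eps j * A x k j * f j i x) := by
    simp only [Finset.mul_sum]
    exact Finset.sum_congr rfl fun j _ => by ring
  rw [hrhs] at key
  exact mul_left_cancel₀ hA0 key

end
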